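/- For every Boolean function f : {0,1}^n → {0,1}, define f_i for 1 ≤ i ≤ 2n+1 by f_{2k}(x) = Th_k(x) and f_{2k+1}(x) = Th_{k+1}(x) ∨ (Th_k(x) ∧ f(x)). Then f_{i+1} ⇒ f_i for all i, each f_{2k} is monotone, each f_{2k+1} is monotone, and f = f_1 ⊕ f_2 ⊕ ... ⊕ f_{2n+1}. -/
import Mathlib

def xorFold (l : List Bool) : Bool := l.foldr Bool.xor false

def wt {n : ℕ} (x : Fin n → Bool) : ℕ := (Finset.univ.filter fun i => x i = true).card

/-- The threshold function: Th k x = 1 iff x has at least k ones. -/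
def Th {n : ℕ} (k : ℕ) (x : Fin n → Bool) : Bool := decide (k ≤ wt x)

lemma xorFold_cons (a : Bool) (l : List Bool) : xorFold (a :: l) = xor a (xorFold l) := rfl

lemma xorFold_falses (m : ℕ) : xorFold (List.replicate m false) = false := by
  induction m with
  | zero => rfl
  | succ m ih => simp [List.replicate_succ, xorFold_cons, ih]

lemma xorFold_trues (k : ℕ) (l : List Bool) :
    xorFold (List.replicate (2 * k) true ++ l) = xorFold l := by
  induction k with
  | zero => rfl
  | succ k ih =>
    have : 2 * (k + 1) = (2 * k) + 1 + 1 := by ring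
    simp [this, List.replicate_succ, xorFold_cons, ih, Bool.xor_assoc]

lemma wt_le {n : ℕ} (x : Fin n → Bool) : wt x ≤ n := by
  have := Finset.card_filter_le Finset.univ (fun i => x i = true)
  simpa [wt] using this

lemma wt_mono {n : ℕ} {x y : Fin n → Bool} (h : x ≤ y) : wt x ≤ wt y := by
  apply Finset.card_le_card
  intro i hi
  simp only [Finset.mem_filter, Finset.mem_univ, true_and] at *
  have := h i
  rw [hi] at this
  exact Bool.le_iff_imp.mp this rfl

lemma wt_eq_imp {n : ℕ} {x y : Fin n → Bool} (h : x ≤ y) (hw : wt y ≤ wt x) : x = y := by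
  have hsub : (Finset.univ.filter fun i => x i = true) ⊆ (Finset.univ.filter fun i => y i = true) := by
    intro i hi
    simp only [Finset.mem_filter, Finset.mem_univ, true_and] at *
    have := h i
    rw [hi] at this
    exact Bool.le_iff_imp.mp this rfl
  have := Finset.eq_of_subset_of_card_le hsub hw
  funext i
  have hiff : x i = true ↔ y i = true := by
    constructor
    · intro hx; have := hsub (by simpa using hx); simpa using this
    · intro hy
      have : i ∈ (Finset.univ.filter fun i => x i = true) := by
        rw [this]; simpa using hy
      simpa using this
  cases hx : x i <;> cases hy : y i <;> simp_all

lemma list_struct (n w : ℕ) (hw : w ≤ n) (b : Bool) (g : Fin (2*n+1) → Bool)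
    (hg : ∀ j : Fin (2*n+1), g j = if ((j:ℕ)+1)%2=0 then decide (((j:ℕ)+1)/2 ≤ w)
        else (decide ((j:ℕ)/2+1 ≤ w) || (decide ((j:ℕ)/2 ≤ w) && b))) :
    List.ofFn g = List.replicate (2*w) true ++ b :: List.replicate (2*(n-w)) false := by
  apply List.ext_getElem
  · simp; omega
  · intro i h1 h2
    rw [List.getElem_ofFn, hg]
    simp only [Fin.val_mk]
    rcases lt_trichotomy i (2*w) with hi | hi | hi
    · rw [List.getElem_append_left (by simpa using hi)]
      rw [List.getElem_replicate]
      split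
      · next h => simp; omega
      · next h =>
          have : i/2 + 1 ≤ w := by omega
          simp [this]
    · rw [List.getElem_append_right (by simp; omega)]
      simp only [List.length_replicate]
      have : i - 2*w = 0 := by omega
      rw [List.getElem_cons]
      simp only [this]
      subst hi
      rw [if_neg (by omega)]
      have h1 : 2*w/2 = w := by omega
      rw [h1]
      simp
    · rw [List.getElem_append_right (by simp; omega)]
      simp only [List.length_replicate]
      rw [List.getElem_cons, dif_neg (by omega : ¬ (i - 2*w = 0)), List.getElem_replicate]
      split
      · next h => simp; omega
      · next h =>
        have ha : ¬((i:ℕ)/2 + 1 ≤ w) := by omega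
        have hb : ¬((i:ℕ)/2 ≤ w) := by omega
        simp [ha, hb]


/-- The threshold-based monotone decomposition of an arbitrary Boolean function:
with 1-indexed functions f_1, ..., f_{2n+1} (here F j = f_{j+1}), where
f_{2k} = Th_k and f_{2k+1} = Th_{k+1} ∨ (Th_k ∧ f); all are monotone, satisfy
f_{i+1} ⇒ f_i, and f = f_1 ⊕ ... ⊕ f_{2n+1}. -/
theorem threshold_decomposition (n : ℕ) (f : (Fin n → Bool) → Bool)
    (F : Fin (2 * n + 1) → (Fin n → Bool) → Bool)
    (hF : ∀ (j : Fin (2 * n + 1)) (x : Fin n → Bool),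
      F j x = if ((j : ℕ) + 1) % 2 = 0 then Th (((j : ℕ) + 1) / 2) x
              else (Th ((j : ℕ) / 2 + 1) x || (Th ((j : ℕ) / 2) x && f x))) :
    (∀ i j : Fin (2 * n + 1), (j : ℕ) = (i : ℕ) + 1 →
      ∀ x, F j x = true → F i x = true) ∧
    (∀ j, Monotone (F j)) ∧
    (∀ x, f x = xorFold (List.ofFn fun j => F j x)) := by
  refine ⟨?_, ?_, ?_⟩
  · intro i j hij x hx
    rw [hF] at hx ⊢
    rcases Nat.even_or_odd ((i : ℕ)) with he | ho
    · obtain ⟨m, hm⟩ := he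
      rw [hij, if_pos (by omega)] at hx
      rw [if_neg (by omega)]
      simp only [Th, decide_eq_true_eq, Bool.or_eq_true, Bool.and_eq_true] at hx ⊢
      exact Or.inl (by omega)
    · obtain ⟨m, hm⟩ := ho
      rw [hij, if_neg (by omega)] at hx
      rw [if_pos (by omega)]
      simp only [Th, decide_eq_true_eq, Bool.or_eq_true, Bool.and_eq_true] at hx ⊢
      rcases hx with h | ⟨h, _⟩ <;> omega
  · intro j x y hxy
    rw [hF, hF]
    have hw := wt_mono hxy
    split
    · rw [Bool.le_iff_imp]
      intro h
      simp only [Th, decide_eq_true_eq] at h ⊢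
      omega
    · rw [Bool.le_iff_imp]
      intro h
      simp only [Th, Bool.or_eq_true, Bool.and_eq_true, decide_eq_true_eq] at h ⊢
      rcases h with h | ⟨h1, h2⟩
      · exact Or.inl (by omega)
      · by_cases hw2 : ((j : ℕ) / 2 + 1 ≤ wt y)
        · exact Or.inl hw2
        · have hxe : x = y := wt_eq_imp hxy (by omega)
          exact Or.inr ⟨by omega, hxe ▸ h2⟩
  · intro x
    have key := list_struct n (wt x) (wt_le x) (f x) (fun j => F j x)
      (fun j => by show F j x = _; rw [hF]; rfl)
    rw [key, xorFold_trues, xorFold_cons, xorFold_falses, Bool.xor_false]
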